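/- Let E be a complex Banach space and A a closable densely defined linear operator in E with domain D and closure A̅. Let Q, R : E → E be bounded linear operators such that Q(D) ⊆ D and R(D) ⊆ D, let B and C be bounded linear operators on E extending D ∋ u ↦ A(Qu) and D ∋ u ↦ A(Ru) respectively, and assume u = Q(Au) + Ru for every u ∈ D. Then the graph of A̅ admits the parametrization G(A̅) = {(Qx + Ry, Bx + Cy) : x, y ∈ E}; that is, the graph of A̅ is the image of the bounded operator on E ⊕ E given by the matrix with rows (Q, R) and (B, C). -/

import Mathlib

/-- **Parametrization of the graph of the closure.**
Let `E` be a complex Banach space and `A` a closable densely defined unbounded operator in `E`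
with domain `D`. Let `Q R : E →L[ℂ] E` map `D` into `D`, let `B` and `C` be bounded operators
extending `D ∋ u ↦ A (Q u)` and `D ∋ u ↦ A (R u)` respectively, and assume
`u = Q (A u) + R u` for `u ∈ D`. Then the graph of `A.closure` is
`{(Q x + R y, B x + C y) : x y ∈ E}`, i.e. the range of the block operator
`(x, y) ↦ (Q x + R y, B x + C y)` on `E × E`. -/
theorem graph_closure_eq_range_block
    {E : Type*} [NormedAddCommGroup E] [NormedSpace ℂ E] [CompleteSpace E]
    (A : E →ₗ.[ℂ] E) (hdense : Dense (A.domain : Set E)) (hclos : A.IsClosable)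
    (Q R : E →L[ℂ] E)
    (hQ : ∀ u : A.domain, Q (u : E) ∈ A.domain)
    (hR : ∀ u : A.domain, R (u : E) ∈ A.domain)
    (B : E →L[ℂ] E) (hB : ∀ u : A.domain, A ⟨Q (u : E), hQ u⟩ = B (u : E))
    (C : E →L[ℂ] E) (hC : ∀ u : A.domain, A ⟨R (u : E), hR u⟩ = C (u : E))
    (hparam : ∀ u : A.domain, (u : E) = Q (A u) + R (u : E)) :
    A.closure.graph
      = LinearMap.range
          (((Q : E →ₗ[ℂ] E).coprod (R : E →ₗ[ℂ] E)).prod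
            ((B : E →ₗ[ℂ] E).coprod (C : E →ₗ[ℂ] E))) := by
  have hgc : A.graph.topologicalClosure = A.closure.graph :=
    hclos.graph_closure_eq_closure_graph
  have hclosed : IsClosed (A.closure.graph : Set (E × E)) := by
    rw [← hgc]; exact A.graph.isClosed_topologicalClosure
  -- the block operator, as a continuous map on E × E
  set S : E × E →L[ℂ] E × E :=
    ((Q.comp (ContinuousLinearMap.fst ℂ E E)) + (R.comp (ContinuousLinearMap.snd ℂ E E))).prod
      ((B.comp (ContinuousLinearMap.fst ℂ E E)) + (C.comp (ContinuousLinearMap.snd ℂ E E)))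
    with hS
  have hSapp : ∀ x y : E, S (x, y) = (Q x + R y, B x + C y) := fun x y => rfl
  -- Step 1: S maps everything into the graph of the closure
  have step1 : ∀ x y : E, (Q x + R y, B x + C y) ∈ A.closure.graph := by
    have hsub : (A.domain : Set E) ×ˢ (A.domain : Set E) ⊆
        S ⁻¹' (A.closure.graph : Set (E × E)) := by
      rintro ⟨x, y⟩ ⟨hx, hy⟩
      have h1 : (Q x + R y, B x + C y) ∈ A.graph := by
        have m1 : ((Q x : E), (A ⟨Q x, hQ ⟨x, hx⟩⟩ : E)) ∈ A.graph :=
          A.mem_graph ⟨Q x, hQ ⟨x, hx⟩⟩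
        have m2 : ((R y : E), (A ⟨R y, hR ⟨y, hy⟩⟩ : E)) ∈ A.graph :=
          A.mem_graph ⟨R y, hR ⟨y, hy⟩⟩
        have := A.graph.add_mem m1 m2
        rwa [Prod.mk_add_mk, hB ⟨x, hx⟩, hC ⟨y, hy⟩] at this
      exact Set.mem_preimage.2 (LinearPMap.le_graph_of_le A.le_closure h1)
    have hdense2 : Dense ((A.domain : Set E) ×ˢ (A.domain : Set E)) := hdense.prod hdense
    have hcl : IsClosed (S ⁻¹' (A.closure.graph : Set (E × E))) :=
      hclosed.preimage S.continuous
    have : S ⁻¹' (A.closure.graph : Set (E × E)) = Set.univ := by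
      apply Set.eq_univ_of_univ_subset
      calc Set.univ = closure ((A.domain : Set E) ×ˢ (A.domain : Set E)) :=
            hdense2.closure_eq.symm
        _ ⊆ _ := closure_minimal hsub hcl
    intro x y
    have : (x, y) ∈ S ⁻¹' (A.closure.graph : Set (E × E)) := this ▸ Set.mem_univ _
    simpa [hSapp] using this
  -- note: le_closure for graph membership
  have hle : ∀ u : A.domain, ((u : E), A u) ∈ A.closure.graph := by
    intro u
    exact LinearPMap.le_graph_of_le A.le_closure (A.mem_graph u)
  -- Step 2: B (A u) + C u = A u for u in the domain
  have step2 : ∀ u : A.domain, B (A u) + C (u : E) = A u := by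
    intro u
    have h1 : (Q (A u) + R (u : E), B (A u) + C (u : E)) ∈ A.closure.graph :=
      step1 (A u) (u : E)
    rw [← hparam u] at h1
    exact A.closure.mem_graph_snd_inj h1 (hle u) rfl
  -- auxiliary continuous map vanishing on the graph of A
  set F : E × E →L[ℂ] E × E :=
    (((Q.comp (ContinuousLinearMap.snd ℂ E E)) + (R.comp (ContinuousLinearMap.fst ℂ E E)))
        - ContinuousLinearMap.fst ℂ E E).prod
      (((B.comp (ContinuousLinearMap.snd ℂ E E)) + (C.comp (ContinuousLinearMap.fst ℂ E E)))
        - ContinuousLinearMap.snd ℂ E E)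
    with hF
  have hFapp : ∀ x y : E, F (x, y) = (Q y + R x - x, B y + C x - y) := fun x y => rfl
  -- Step 3: the graph of the closure is contained in ker F
  have step3 : ∀ p ∈ A.closure.graph, F p = 0 := by
    have hker : A.graph ≤ LinearMap.ker (F : E × E →ₗ[ℂ] E × E) := by
      intro p hp
      obtain ⟨u, rfl⟩ := (A.mem_graph_iff' ).1 hp
      have : F ((u : E), A u) = 0 := by
        rw [hFapp, ← hparam u, step2 u]
        simp
      simpa [LinearMap.mem_ker] using this
    have hclker : A.graph.topologicalClosure ≤ LinearMap.ker (F : E × E →ₗ[ℂ] E × E) :=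
      A.graph.topologicalClosure_minimal hker (ContinuousLinearMap.isClosed_ker F)
    intro p hp
    rw [← hgc] at hp
    exact hclker hp
  -- conclude
  ext ⟨u, v⟩
  constructor
  · intro h
    have hF0 := step3 _ h
    rw [hFapp] at hF0
    have h1 : Q v + R u - u = 0 := congrArg Prod.fst hF0
    have h2 : B v + C u - v = 0 := congrArg Prod.snd hF0
    refine ⟨(v, u), ?_⟩
    simp only [LinearMap.prod_apply, LinearMap.coprod_apply, Function.prod,
      ContinuousLinearMap.coe_coe]
    rw [sub_eq_zero] at h1 h2
    rw [h1, h2]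
  · rintro ⟨⟨x, y⟩, h⟩
    rw [← h]
    exact step1 x y
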